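/- For any two disjoint maximal commuting Pauli classes C₁ and C₂ in dimension d = 4, there exists a maximal commuting Pauli class C₃′, disjoint from C₁ and from C₂, such that the family {C₁, C₂, C₃′} is unextendible. -/
import Mathlib


open Matrix

noncomputable section

/-- Matrices on the Hilbert space of `n` qubits, with rows and columns indexed by
bit strings `Fin n → Fin 2`. -/
abbrev QMat (n : ℕ) := Matrix (Fin n → Fin 2) (Fin n → Fin 2) ℂ

/-- The single-qubit identity. -/
def pI : Matrix (Fin 2) (Fin 2) ℂ := 1

/-- The single-qubit Pauli X. -/
def pX : Matrix (Fin 2) (Fin 2) ℂ := !![0, 1; 1, 0]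

/-- The single-qubit Pauli Y. -/
def pY : Matrix (Fin 2) (Fin 2) ℂ := !![0, -Complex.I; Complex.I, 0]

/-- The single-qubit Pauli Z. -/
def pZ : Matrix (Fin 2) (Fin 2) ℂ := !![1, 0; 0, -1]

/-- The `n`-fold Kronecker product `W 0 ⊗ ⋯ ⊗ W (n-1)`, realized on indices
`Fin n → Fin 2`. -/
def kron (n : ℕ) (W : Fin n → Matrix (Fin 2) (Fin 2) ℂ) : QMat n :=
  fun v w => ∏ j, W j (v j) (w j)

/-- `M` is an `n`-qubit Pauli operator: an `n`-fold Kronecker product of matrices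
from `{I₂, X, Y, Z}`. -/
def IsPauliOp (n : ℕ) (M : QMat n) : Prop :=
  ∃ W : Fin n → Matrix (Fin 2) (Fin 2) ℂ,
    (∀ j, W j = pI ∨ W j = pX ∨ W j = pY ∨ W j = pZ) ∧ M = kron n W

/-- Two matrices are equal up to phase if one is a nonzero scalar multiple of the other. -/
def PhaseEq {m : Type*} (A B : Matrix m m ℂ) : Prop := ∃ c : ℂ, c ≠ 0 ∧ A = c • B

/-- A maximal commuting Pauli class in dimension `d = 2 ^ n`: a set of `d - 1`
pairwise commuting non-identity `n`-qubit Pauli operators, pairwise distinct up to phase. -/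
def IsMaxClass (n : ℕ) (C : Set (QMat n)) : Prop :=
  C.Finite ∧ C.ncard = 2 ^ n - 1 ∧
  (∀ U ∈ C, IsPauliOp n U ∧ U ≠ 1) ∧
  (∀ U ∈ C, ∀ V ∈ C, U * V = V * U) ∧
  (∀ U ∈ C, ∀ V ∈ C, U ≠ V → ¬ PhaseEq U V)

/-- Two classes are disjoint if no member of one is equal up to phase to a member of the other. -/
def ClassDisjoint {n : ℕ} (C D : Set (QMat n)) : Prop :=
  ∀ U ∈ C, ∀ V ∈ D, ¬ PhaseEq U V

/-- Two classes are equal up to phase (as sets of operators). -/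
def ClassPhaseEq {n : ℕ} (C D : Set (QMat n)) : Prop :=
  (∀ U ∈ C, ∃ V ∈ D, PhaseEq U V) ∧ (∀ V ∈ D, ∃ U ∈ C, PhaseEq U V)

/-- The standard Hermitian inner product on `ι → ℂ` (conjugate-linear in the first slot). -/
def cinner {ι : Type*} [Fintype ι] (x y : ι → ℂ) : ℂ :=
  ∑ k, (starRingEnd ℂ) (x k) * y k

section KronLemmas

lemma kron_mul (n : ℕ) (W W' : Fin n → Matrix (Fin 2) (Fin 2) ℂ) :
    kron n W * kron n W' = kron n (fun j => W j * W' j) := by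
  ext v w
  simp only [kron, Matrix.mul_apply]
  have := (Finset.prod_univ_sum (fun _ : Fin n => (Finset.univ : Finset (Fin 2)))
    (fun j k => W j (v j) k * W' j k (w j)))
  rw [Fintype.piFinset_univ] at this
  rw [show (∑ x : Fin n → Fin 2, (∏ j : Fin n, W j (v j) (x j)) * ∏ j : Fin n, W' j (x j) (w j))
      = ∑ x : Fin n → Fin 2, ∏ j : Fin n, W j (v j) (x j) * W' j (x j) (w j) from
    Finset.sum_congr rfl (fun x _ => (Finset.prod_mul_distrib).symm), ← this]

lemma kron_smul (n : ℕ) (c : Fin n → ℂ) (W : Fin n → Matrix (Fin 2) (Fin 2) ℂ) :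
    kron n (fun j => c j • W j) = (∏ j, c j) • kron n W := by
  ext v w
  simp [kron, Matrix.smul_apply, smul_eq_mul, Finset.prod_mul_distrib]

lemma kron_one (n : ℕ) : kron n (fun _ => (1 : Matrix (Fin 2) (Fin 2) ℂ)) = 1 := by
  ext v w
  simp only [kron, Matrix.one_apply]
  by_cases h : v = w
  · simp [h]
  · rw [if_neg h]
    obtain ⟨j, hj⟩ := Function.ne_iff.mp h
    exact Finset.prod_eq_zero (Finset.mem_univ j) (by simp [hj])

lemma trace_kron (n : ℕ) (W : Fin n → Matrix (Fin 2) (Fin 2) ℂ) :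
    (kron n W).trace = ∏ j, (W j).trace := by
  simp only [Matrix.trace, Matrix.diag, kron]
  have := (Finset.prod_univ_sum (fun _ : Fin n => (Finset.univ : Finset (Fin 2)))
    (fun j k => W j k k))
  rw [Fintype.piFinset_univ] at this
  rw [this]

end KronLemmas
section Letters

/-- Symplectic code for one qubit: `letter x z` is (up to phase) `X^x Z^z`. -/
def letter (x z : Bool) : Matrix (Fin 2) (Fin 2) ℂ :=
  if x then (if z then pY else pX) else (if z then pZ else pI)

lemma letter_opt (x z : Bool) : letter x z = pI ∨ letter x z = pX ∨ letter x z = pY ∨ letter x z = pZ := by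
  cases x <;> cases z <;> simp [letter]

lemma opt_letter {A : Matrix (Fin 2) (Fin 2) ℂ} (h : A = pI ∨ A = pX ∨ A = pY ∨ A = pZ) :
    ∃ x z : Bool, A = letter x z := by
  rcases h with h | h | h | h
  exacts [⟨false, false, by simp [letter, h]⟩, ⟨true, false, by simp [letter, h]⟩,
    ⟨true, true, by simp [letter, h]⟩, ⟨false, true, by simp [letter, h]⟩]

lemma letter_mul_self (x z : Bool) : letter x z * letter x z = 1 := by
  cases x <;> cases z <;>
    · ext i j
      fin_cases i <;> fin_cases j <;>
        simp [letter, pI, pX, pY, pZ, Matrix.mul_apply, Fin.sum_univ_two, Matrix.one_apply,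
          Complex.ext_iff]

lemma letter_comm (x z x' z' : Bool) :
    letter x' z' * letter x z
      = (if xor (x && z') (z && x') then (-1 : ℂ) else 1) • (letter x z * letter x' z') := by
  cases x <;> cases z <;> cases x' <;> cases z' <;>
    · ext i j
      fin_cases i <;> fin_cases j <;>
        simp [letter, pI, pX, pY, pZ, Matrix.mul_apply, Fin.sum_univ_two, Matrix.one_apply,
          Complex.ext_iff]

lemma trace_letter_mul (x z x' z' : Bool) :
    (letter x z * letter x' z').trace = if x = x' ∧ z = z' then 2 else 0 := by
  cases x <;> cases z <;> cases x' <;> cases z' <;>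
    · simp [letter, pI, pX, pY, pZ, Matrix.trace_fin_two, Matrix.mul_apply, Fin.sum_univ_two,
        Matrix.one_apply, Complex.ext_iff]
      try norm_num

end Letters
section PauliCodes

/-- Code space for two qubits: `((x₁,z₁),(x₂,z₂))`. -/
abbrev V := (Bool × Bool) × (Bool × Bool)

def V0 : V := ((false, false), (false, false))

def vadd (a b : V) : V :=
  ((xor a.1.1 b.1.1, xor a.1.2 b.1.2), (xor a.2.1 b.2.1, xor a.2.2 b.2.2))

def symp (a b : V) : Bool :=
  xor (xor (a.1.1 && b.1.2) (a.1.2 && b.1.1)) (xor (a.2.1 && b.2.2) (a.2.2 && b.2.1))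

/-- The Pauli operator with code `v`. -/
def P (v : V) : QMat 2 := kron 2 ![letter v.1.1 v.1.2, letter v.2.1 v.2.2]

lemma P_mul_self (v : V) : P v * P v = 1 := by
  rw [P, kron_mul]
  rw [show (fun j => ![letter v.1.1 v.1.2, letter v.2.1 v.2.2] j *
      ![letter v.1.1 v.1.2, letter v.2.1 v.2.2] j) = fun _ => (1 : Matrix (Fin 2) (Fin 2) ℂ) from
    funext fun j => by fin_cases j <;> simp [letter_mul_self]]
  exact kron_one 2

lemma P_mul_ne_zero (u v : V) : P u * P v ≠ 0 := by
  intro h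
  have h2 : (P u * P v) * (P v * P u) = 1 := by
    rw [mul_assoc, ← mul_assoc (P v), P_mul_self, one_mul, P_mul_self]
  rw [h, zero_mul] at h2
  exact zero_ne_one h2

lemma P_anticomm (u v : V) :
    P v * P u = (if symp u v then (-1 : ℂ) else 1) • (P u * P v) := by
  rw [P, P, kron_mul, kron_mul]
  have hfun : (fun j => ![letter v.1.1 v.1.2, letter v.2.1 v.2.2] j *
      ![letter u.1.1 u.1.2, letter u.2.1 u.2.2] j)
      = fun j => (![if xor (u.1.1 && v.1.2) (u.1.2 && v.1.1) then (-1 : ℂ) else 1,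
          if xor (u.2.1 && v.2.2) (u.2.2 && v.2.1) then (-1 : ℂ) else 1] j) •
        (![letter u.1.1 u.1.2, letter u.2.1 u.2.2] j *
         ![letter v.1.1 v.1.2, letter v.2.1 v.2.2] j) := by
    funext j
    fin_cases j
    · simpa using letter_comm u.1.1 u.1.2 v.1.1 v.1.2
    · simpa using letter_comm u.2.1 u.2.2 v.2.1 v.2.2
  rw [hfun, kron_smul]
  congr 1
  rw [Fin.prod_univ_two]
  simp only [Matrix.cons_val_zero, Matrix.cons_val_one, Matrix.head_cons, symp]
  have key : ∀ s t : Bool, ((if s then (-1 : ℂ) else 1) * if t then (-1 : ℂ) else 1)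
      = if xor s t then (-1 : ℂ) else 1 := by
    intro s t; cases s <;> cases t <;> norm_num
  exact key _ _

lemma P_comm_iff (u v : V) : P u * P v = P v * P u ↔ symp u v = false := by
  constructor
  · intro h
    by_contra hs
    rw [Bool.not_eq_false] at hs
    have h2 := P_anticomm u v
    rw [hs, if_pos rfl, ← h] at h2
    have h3 : (2 : ℂ) • (P u * P v) = 0 := by
      rw [two_smul]
      nth_rewrite 1 [h2]
      simp
    rcases smul_eq_zero.mp h3 with h4 | h4
    · norm_num at h4
    · exact P_mul_ne_zero u v h4
  · intro h
    have h2 := P_anticomm u v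
    rw [h] at h2
    simpa using h2.symm

lemma trace_P_mul (u v : V) : (P u * P v).trace = if u = v then 4 else 0 := by
  rw [P, P, kron_mul, trace_kron, Fin.prod_univ_two]
  simp only [Matrix.cons_val_zero, Matrix.cons_val_one, Matrix.head_cons]
  rw [trace_letter_mul, trace_letter_mul]
  rcases u with ⟨⟨a, b⟩, ⟨c, d⟩⟩
  rcases v with ⟨⟨a', b'⟩, ⟨c', d'⟩⟩
  simp only [Prod.mk.injEq]
  split_ifs <;> simp_all <;> norm_num

lemma P_phase_inj {u v : V} (h : PhaseEq (P u) (P v)) : u = v := by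
  obtain ⟨c, hc, h⟩ := h
  have t1 : (P v * P u).trace = c * 4 := by
    rw [h, Matrix.mul_smul, Matrix.trace_smul, trace_P_mul, if_pos rfl]
    simp [smul_eq_mul]
  rw [trace_P_mul] at t1
  by_cases hvu : v = u
  · exact hvu.symm
  · rw [if_neg hvu] at t1
    exfalso
    apply hc
    have : c * 4 = 0 := t1.symm
    simpa using this

lemma P_inj {u v : V} (h : P u = P v) : u = v :=
  P_phase_inj ⟨1, one_ne_zero, by simp [h]⟩

lemma P_V0 : P V0 = 1 := by
  rw [P]
  rw [show ![letter V0.1.1 V0.1.2, letter V0.2.1 V0.2.2] = fun _ => (1 : Matrix (Fin 2) (Fin 2) ℂ)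
    from funext fun j => by fin_cases j <;> simp [V0, letter, pI]]
  exact kron_one 2

lemma P_ne_one {v : V} (h : v ≠ V0) : P v ≠ 1 := fun h1 => h (P_inj (h1.trans P_V0.symm))

lemma isPauliOp_P (v : V) : IsPauliOp 2 (P v) :=
  ⟨![letter v.1.1 v.1.2, letter v.2.1 v.2.2],
    fun j => by fin_cases j <;> simpa using letter_opt _ _, rfl⟩

lemma pauliOp_eq_P {M : QMat 2} (h : IsPauliOp 2 M) : ∃ v : V, M = P v := by
  obtain ⟨W, hW, rfl⟩ := h
  obtain ⟨x0, z0, h0⟩ := opt_letter (hW 0)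
  obtain ⟨x1, z1, h1⟩ := opt_letter (hW 1)
  refine ⟨((x0, z0), (x1, z1)), ?_⟩
  have hWe : W = ![letter x0 z0, letter x1 z1] := by
    funext j
    fin_cases j
    · simpa using h0
    · simpa using h1
  rw [hWe]
  simp [P]

end PauliCodes
section Combinatorics

/-- `GoodP a b`: `a`, `b` generate a line (isotropic plane) of the symplectic space. -/
def GoodP (a b : V) : Prop := a ≠ V0 ∧ b ≠ V0 ∧ a ≠ b ∧ symp a b = false

instance : DecidablePred fun p : V × V => GoodP p.1 p.2 := fun _ => by
  unfold GoodP; infer_instance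

instance (a b : V) : Decidable (GoodP a b) := by unfold GoodP; infer_instance

/-- membership of `x` in the line generated by `a`, `b`. -/
def memL (x a b : V) : Prop := x = a ∨ x = b ∨ x = vadd a b

instance (x a b : V) : Decidable (memL x a b) := by unfold memL; infer_instance

/-- Table of the 15 lines of `W(3,2)`, by generating pairs. -/
def Lb : Fin 15 → V × V
| 0 => (((true, false), (false, false)), ((false, false), (true, false)))
| 1 => (((true, false), (false, false)), ((false, false), (false, true)))
| 2 => (((true, false), (false, false)), ((false, false), (true, true)))
| 3 => (((false, true), (false, false)), ((false, false), (true, false)))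
| 4 => (((false, true), (false, false)), ((false, false), (false, true)))
| 5 => (((false, true), (false, false)), ((false, false), (true, true)))
| 6 => (((true, true), (false, false)), ((false, false), (true, false)))
| 7 => (((true, true), (false, false)), ((false, false), (false, true)))
| 8 => (((true, true), (false, false)), ((false, false), (true, true)))
| 9 => (((true, false), (true, false)), ((false, true), (false, true)))
| 10 => (((true, false), (true, false)), ((true, true), (false, true)))
| 11 => (((false, true), (true, false)), ((true, false), (false, true)))
| 12 => (((false, true), (true, false)), ((true, true), (false, true)))
| 13 => (((true, true), (true, false)), ((true, false), (false, true)))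
| _ => (((true, true), (true, false)), ((false, true), (false, true)))

/-- Disjointness of two lines given by indices. -/
def LD (i j : Fin 15) : Prop :=
  ∀ u : V, ¬ (memL u (Lb i).1 (Lb i).2 ∧ memL u (Lb j).1 (Lb j).2)

instance (i j : Fin 15) : Decidable (LD i j) := by unfold LD; infer_instance

lemma good_Lb : ∀ i : Fin 15, GoodP (Lb i).1 (Lb i).2 := by decide

lemma sympSelf : ∀ a b : V, symp a b = false →
    symp a (vadd a b) = false ∧ symp b (vadd a b) = false ∧ symp b a = false ∧
    symp (vadd a b) a = false ∧ symp (vadd a b) b = false := by decide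

lemma vadd_facts : ∀ a b : V, GoodP a b →
    vadd a b ≠ V0 ∧ vadd a b ≠ a ∧ vadd a b ≠ b := by decide

set_option maxRecDepth 100000 in
set_option synthInstance.maxSize 4096 in
set_option synthInstance.maxHeartbeats 2000000 in
lemma lineThird : ∀ u v w : V, (u ≠ V0 ∧ v ≠ V0 ∧ w ≠ V0 ∧ u ≠ v ∧ u ≠ w ∧ v ≠ w ∧
    symp u v = false ∧ symp u w = false ∧ symp v w = false) → w = vadd u v := by decide

lemma lineEq : ∀ a b : V, GoodP a b →
    ∃ j : Fin 15, ∀ x : V, (memL x a b ↔ memL x (Lb j).1 (Lb j).2) := by decide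

set_option maxRecDepth 100000 in
set_option maxHeartbeats 4000000 in
lemma key : ∀ i1 i2 : Fin 15, LD i1 i2 →
    ∃ i3 : Fin 15, LD i3 i1 ∧ LD i3 i2 ∧
      ∀ j : Fin 15, ¬ (LD j i1 ∧ LD j i2 ∧ LD j i3) := by decide

end Combinatorics
section Classes

lemma class_extract {C : Set (QMat 2)} (h : IsMaxClass 2 C) :
    ∃ a b : V, GoodP a b ∧ C = {P a, P b, P (vadd a b)} := by
  obtain ⟨hfin, hcard, hop, hcomm, hph⟩ := h
  have hcard3 : C.ncard = 3 := by simpa using hcard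
  obtain ⟨U, Vm, Wm, hUV, hUW, hVW, hC⟩ := Set.ncard_eq_three.mp hcard3
  have hUmem : U ∈ C := by rw [hC]; simp
  have hVmem : Vm ∈ C := by rw [hC]; simp
  have hWmem : Wm ∈ C := by rw [hC]; simp
  obtain ⟨u, rfl⟩ := pauliOp_eq_P (hop U hUmem).1
  obtain ⟨v, rfl⟩ := pauliOp_eq_P (hop Vm hVmem).1
  obtain ⟨w, rfl⟩ := pauliOp_eq_P (hop Wm hWmem).1
  have hu0 : u ≠ V0 := fun h0 => (hop _ hUmem).2 (by rw [h0, P_V0])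
  have hv0 : v ≠ V0 := fun h0 => (hop _ hVmem).2 (by rw [h0, P_V0])
  have hw0 : w ≠ V0 := fun h0 => (hop _ hWmem).2 (by rw [h0, P_V0])
  have huv : u ≠ v := fun h0 => hUV (by rw [h0])
  have huw : u ≠ w := fun h0 => hUW (by rw [h0])
  have hvw : v ≠ w := fun h0 => hVW (by rw [h0])
  have hsuv : symp u v = false := (P_comm_iff u v).mp (hcomm _ hUmem _ hVmem)
  have hsuw : symp u w = false := (P_comm_iff u w).mp (hcomm _ hUmem _ hWmem)
  have hsvw : symp v w = false := (P_comm_iff v w).mp (hcomm _ hVmem _ hWmem)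
  have hw : w = vadd u v :=
    lineThird u v w ⟨hu0, hv0, hw0, huv, huw, hvw, hsuv, hsuw, hsvw⟩
  exact ⟨u, v, ⟨hu0, hv0, huv, hsuv⟩, by rw [hC, hw]⟩

lemma class_mk (a b : V) (h : GoodP a b) :
    IsMaxClass 2 ({P a, P b, P (vadd a b)} : Set (QMat 2)) := by
  obtain ⟨ha0, hb0, hab, hs⟩ := h
  obtain ⟨hc0, hca, hcb⟩ := vadd_facts a b ⟨ha0, hb0, hab, hs⟩
  obtain ⟨hsac, hsbc, hsba, hsca, hscb⟩ := sympSelf a b hs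
  have hPab : P a ≠ P b := fun h => hab (P_inj h)
  have hPac : P a ≠ P (vadd a b) := fun h => hca (P_inj h).symm
  have hPbc : P b ≠ P (vadd a b) := fun h => hcb (P_inj h).symm
  refine ⟨Set.toFinite _, ?_, ?_, ?_, ?_⟩
  · have : ({P a, P b, P (vadd a b)} : Set (QMat 2)).ncard = 3 :=
      Set.ncard_eq_three.mpr ⟨_, _, _, hPab, hPac, hPbc, rfl⟩
    simpa using this
  · intro U hU
    simp only [Set.mem_insert_iff, Set.mem_singleton_iff] at hU
    rcases hU with rfl | rfl | rfl
    · exact ⟨isPauliOp_P _, P_ne_one ha0⟩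
    · exact ⟨isPauliOp_P _, P_ne_one hb0⟩
    · exact ⟨isPauliOp_P _, P_ne_one hc0⟩
  · intro U hU V hV
    simp only [Set.mem_insert_iff, Set.mem_singleton_iff] at hU hV
    rcases hU with rfl | rfl | rfl <;> rcases hV with rfl | rfl | rfl <;>
      first
        | rfl
        | exact (P_comm_iff _ _).mpr (by assumption)
  · intro U hU V hV hne hPE
    simp only [Set.mem_insert_iff, Set.mem_singleton_iff] at hU hV
    rcases hU with rfl | rfl | rfl <;> rcases hV with rfl | rfl | rfl <;>
      exact hne (congrArg P (P_phase_inj hPE))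

lemma phaseEq_refl_P (x : V) : PhaseEq (P x) (P x) := ⟨1, one_ne_zero, (one_smul _ _).symm⟩

end Classes
/-- For any two disjoint maximal commuting Pauli classes `C₁`, `C₂` in `d = 4`
there is a third maximal commuting Pauli class `C₃'`, disjoint from both, such that the
family `{C₁, C₂, C₃'}` is unextendible. -/
theorem exists_unextendible_triple_d4 (C₁ C₂ : Set (QMat 2))
    (h1 : IsMaxClass 2 C₁) (h2 : IsMaxClass 2 C₂) (hd : ClassDisjoint C₁ C₂) :
    ∃ C₃' : Set (QMat 2), IsMaxClass 2 C₃' ∧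
      ClassDisjoint C₃' C₁ ∧ ClassDisjoint C₃' C₂ ∧
      ¬ ∃ R : Set (QMat 2), IsMaxClass 2 R ∧
          ∀ U ∈ R, ∀ V ∈ C₁ ∪ C₂ ∪ C₃', ¬ PhaseEq U V := by
  obtain ⟨a, b, hG1, hC1⟩ := class_extract h1
  obtain ⟨d, e, hG2, hC2⟩ := class_extract h2
  have mem1 : ∀ x : V, memL x a b → P x ∈ C₁ := by
    intro x hx; rcases hx with rfl | rfl | rfl <;> rw [hC1] <;> simp
  have mem2 : ∀ x : V, memL x d e → P x ∈ C₂ := by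
    intro x hx; rcases hx with rfl | rfl | rfl <;> rw [hC2] <;> simp
  obtain ⟨j1, hj1⟩ := lineEq a b hG1
  obtain ⟨j2, hj2⟩ := lineEq d e hG2
  have hLD12 : LD j1 j2 := by
    intro u hu
    exact hd _ (mem1 u ((hj1 u).mpr hu.1)) _ (mem2 u ((hj2 u).mpr hu.2)) (phaseEq_refl_P u)
  obtain ⟨i3, d31, d32, hmax⟩ := key j1 j2 hLD12
  have hG3 : GoodP (Lb i3).1 (Lb i3).2 := good_Lb i3
  set g : V := (Lb i3).1 with hg
  set k : V := (Lb i3).2 with hk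
  refine ⟨{P g, P k, P (vadd g k)}, class_mk g k hG3, ?_, ?_, ?_⟩
  · -- ClassDisjoint C₃' C₁
    intro U hU Vm hVm hPE
    simp only [Set.mem_insert_iff, Set.mem_singleton_iff] at hU
    obtain ⟨y, hy, rfl⟩ : ∃ y : V, memL y a b ∧ Vm = P y := by
      rw [hC1] at hVm
      simp only [Set.mem_insert_iff, Set.mem_singleton_iff] at hVm
      rcases hVm with rfl | rfl | rfl
      exacts [⟨a, Or.inl rfl, rfl⟩, ⟨b, Or.inr (Or.inl rfl), rfl⟩,
        ⟨vadd a b, Or.inr (Or.inr rfl), rfl⟩]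
    have hx : ∃ x : V, memL x g k ∧ U = P x := by
      rcases hU with rfl | rfl | rfl
      exacts [⟨g, Or.inl rfl, rfl⟩, ⟨k, Or.inr (Or.inl rfl), rfl⟩,
        ⟨vadd g k, Or.inr (Or.inr rfl), rfl⟩]
    obtain ⟨x, hxm, rfl⟩ := hx
    have hxy : x = y := P_phase_inj hPE
    exact d31 x ⟨hxm, (hj1 x).mp (hxy ▸ hy)⟩
  · -- ClassDisjoint C₃' C₂
    intro U hU Vm hVm hPE
    simp only [Set.mem_insert_iff, Set.mem_singleton_iff] at hU
    obtain ⟨y, hy, rfl⟩ : ∃ y : V, memL y d e ∧ Vm = P y := by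
      rw [hC2] at hVm
      simp only [Set.mem_insert_iff, Set.mem_singleton_iff] at hVm
      rcases hVm with rfl | rfl | rfl
      exacts [⟨d, Or.inl rfl, rfl⟩, ⟨e, Or.inr (Or.inl rfl), rfl⟩,
        ⟨vadd d e, Or.inr (Or.inr rfl), rfl⟩]
    have hx : ∃ x : V, memL x g k ∧ U = P x := by
      rcases hU with rfl | rfl | rfl
      exacts [⟨g, Or.inl rfl, rfl⟩, ⟨k, Or.inr (Or.inl rfl), rfl⟩,
        ⟨vadd g k, Or.inr (Or.inr rfl), rfl⟩]
    obtain ⟨x, hxm, rfl⟩ := hx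
    have hxy : x = y := P_phase_inj hPE
    exact d32 x ⟨hxm, (hj2 x).mp (hxy ▸ hy)⟩
  · -- unextendibility
    rintro ⟨R, hR, havoid⟩
    obtain ⟨p, q, hGpq, hCR⟩ := class_extract hR
    have memR : ∀ x : V, memL x p q → P x ∈ R := by
      intro x hx; rcases hx with rfl | rfl | rfl <;> rw [hCR] <;> simp
    have mem3 : ∀ x : V, memL x g k → P x ∈ ({P g, P k, P (vadd g k)} : Set (QMat 2)) := by
      intro x hx; rcases hx with rfl | rfl | rfl <;> simp
    obtain ⟨j, hj⟩ := lineEq p q hGpq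
    have hDa : LD j j1 := by
      intro u hu
      exact havoid _ (memR u ((hj u).mpr hu.1)) _
        (Set.mem_union_left _ (Set.mem_union_left _ (mem1 u ((hj1 u).mpr hu.2))))
        (phaseEq_refl_P u)
    have hDb : LD j j2 := by
      intro u hu
      exact havoid _ (memR u ((hj u).mpr hu.1)) _
        (Set.mem_union_left _ (Set.mem_union_right _ (mem2 u ((hj2 u).mpr hu.2))))
        (phaseEq_refl_P u)
    have hDc : LD j i3 := by
      intro u hu
      exact havoid _ (memR u ((hj u).mpr hu.1)) _
        (Set.mem_union_right _ (mem3 u hu.2)) (phaseEq_refl_P u)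
    exact hmax j ⟨hDa, hDb, hDc⟩
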